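/- Let n ≥ 2 and m ≥ 1 be integers and let X be an n×m Latin hypercube design. Then the minimum pairwise L1-distance of X satisfies d_1(X) ≤ ⌊(n+1)m/3⌋. -/
import Mathlib

open Finset

lemma icc_ins (n : ℕ) : Finset.Icc 1 (n+1) = insert (n+1) (Finset.Icc 1 n) :=
  (Finset.insert_Icc_right_eq_Icc_add_one (by omega)).symm

lemma gauss_shift (n : ℕ) :
    2 * (∑ b ∈ Finset.Icc 1 n, (n + 1 - b)) = n * (n + 1) := by
  induction n with
  | zero => simp
  | succ n ih =>
    rw [icc_ins, Finset.sum_insert (by simp)]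
    have hcongr : ∑ b ∈ Finset.Icc 1 n, (n + 1 + 1 - b)
        = ∑ b ∈ Finset.Icc 1 n, ((n + 1 - b) + 1) := by
      apply Finset.sum_congr rfl
      intro b hb
      simp only [Finset.mem_Icc] at hb
      omega
    have e1 : n + 1 + 1 - (n + 1) = 1 := by omega
    rw [hcongr, Finset.sum_add_distrib, e1]
    simp only [Finset.sum_const, Nat.card_Icc, smul_eq_mul, Nat.add_sub_cancel, mul_one]
    ring_nf
    ring_nf at ih
    linarith

lemma sumAbs_key (n : ℕ) :
    3 * (∑ a ∈ Finset.Icc 1 n, ∑ b ∈ Finset.Icc 1 n, ((a : ℤ) - b).natAbs) + n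
      = n ^ 3 := by
  induction n with
  | zero => simp
  | succ n ih =>
    rw [icc_ins, Finset.sum_insert (by simp), Finset.sum_insert (by simp)]
    have h1 : ((((n:ℕ)+1 : ℕ) : ℤ) - (((n:ℕ)+1 : ℕ) : ℤ)).natAbs = 0 := by simp
    have h2 : ∑ b ∈ Finset.Icc 1 n, ((((n:ℕ)+1 : ℕ) : ℤ) - b).natAbs
        = ∑ b ∈ Finset.Icc 1 n, (n + 1 - b) := by
      apply Finset.sum_congr rfl
      intro b hb
      simp only [Finset.mem_Icc] at hb
      omega
    have h3 : ∑ a ∈ Finset.Icc 1 n,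
          (Finset.sum (insert (n+1) (Finset.Icc 1 n))
            (fun b => ((a : ℤ) - ((b:ℕ) : ℤ)).natAbs))
        = (∑ a ∈ Finset.Icc 1 n, (n + 1 - a))
          + ∑ a ∈ Finset.Icc 1 n, ∑ b ∈ Finset.Icc 1 n, ((a : ℤ) - b).natAbs := by
      rw [← Finset.sum_add_distrib]
      apply Finset.sum_congr rfl
      intro a ha
      rw [Finset.sum_insert (by simp)]
      simp only [Finset.mem_Icc] at ha
      congr 1
      push_cast
      omega
    rw [h1, h2, h3]
    have hg := gauss_shift n
    set g := ∑ b ∈ Finset.Icc 1 n, (n + 1 - b) with hgdef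
    set s := ∑ a ∈ Finset.Icc 1 n, ∑ b ∈ Finset.Icc 1 n, ((a : ℤ) - b).natAbs with hsdef
    ring_nf
    ring_nf at hg ih
    linarith

theorem stmt_0 (n m : ℕ) (hn : 2 ≤ n) (hm : 1 ≤ m)
    (X : Fin n → Fin m → ℕ)
    (hX : ∀ j : Fin m, Finset.image (fun i => X i j) Finset.univ = Finset.Icc 1 n) :
    ∃ i i' : Fin n, i ≠ i' ∧
      (∑ k : Fin m, ((X i k : ℤ) - (X i' k : ℤ)).natAbs) ≤ (n + 1) * m / 3 := by
  by_contra hcon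
  push_neg at hcon
  set B := (n + 1) * m / 3 with hB
  have hinj : ∀ j : Fin m, Set.InjOn (fun i => X i j) (Finset.univ : Finset (Fin n)) := by
    intro j
    apply Finset.injOn_of_card_image_eq
    rw [hX j]
    simp
  have hcol : ∀ j : Fin m,
      ∑ i : Fin n, ∑ i' : Fin n, ((X i j : ℤ) - (X i' j : ℤ)).natAbs
        = ∑ a ∈ Finset.Icc 1 n, ∑ b ∈ Finset.Icc 1 n, ((a : ℤ) - b).natAbs := by
    intro j
    rw [← hX j, Finset.sum_image (hinj j)]
    apply Finset.sum_congr rfl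
    intro i _
    rw [Finset.sum_image (hinj j)]
  set S := ∑ a ∈ Finset.Icc 1 n, ∑ b ∈ Finset.Icc 1 n, ((a : ℤ) - b).natAbs with hS
  set T := ∑ i : Fin n, ∑ i' : Fin n, ∑ k : Fin m, ((X i k : ℤ) - (X i' k : ℤ)).natAbs with hT
  have hTval : T = m * S := by
    rw [hT]
    have : ∀ i : Fin n, ∑ i' : Fin n, ∑ k : Fin m, ((X i k : ℤ) - (X i' k : ℤ)).natAbs
        = ∑ k : Fin m, ∑ i' : Fin n, ((X i k : ℤ) - (X i' k : ℤ)).natAbs := fun i =>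
      Finset.sum_comm
    simp_rw [this]
    rw [Finset.sum_comm]
    have : ∀ k : Fin m, ∑ i : Fin n, ∑ i' : Fin n, ((X i k : ℤ) - (X i' k : ℤ)).natAbs = S :=
      fun k => hcol k
    simp_rw [this]
    simp [mul_comm]
  -- lower bound on T
  have hTlow : n * ((n - 1) * (B + 1)) ≤ T := by
    rw [hT]
    have hrow : ∀ i : Fin n,
        (n - 1) * (B + 1) ≤ ∑ i' : Fin n, ∑ k : Fin m, ((X i k : ℤ) - (X i' k : ℤ)).natAbs := by
      intro i
      have hsub : Finset.univ.erase i ⊆ (Finset.univ : Finset (Fin n)) := Finset.erase_subset _ _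
      calc (n - 1) * (B + 1)
          = ∑ _i' ∈ Finset.univ.erase i, (B + 1) := by
            rw [Finset.sum_const, Finset.card_erase_of_mem (Finset.mem_univ i)]
            simp [mul_comm]
        _ ≤ ∑ i' ∈ Finset.univ.erase i, ∑ k : Fin m, ((X i k : ℤ) - (X i' k : ℤ)).natAbs := by
            apply Finset.sum_le_sum
            intro i' hi'
            have : i ≠ i' := fun h => (Finset.ne_of_mem_erase hi') h.symm
            exact hcon i i' this
        _ ≤ ∑ i' : Fin n, ∑ k : Fin m, ((X i k : ℤ) - (X i' k : ℤ)).natAbs :=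
            Finset.sum_le_sum_of_subset hsub
    calc n * ((n - 1) * (B + 1)) = ∑ _i : Fin n, (n - 1) * (B + 1) := by simp [mul_comm]
      _ ≤ _ := Finset.sum_le_sum (fun i _ => hrow i)
  have hkey := sumAbs_key n
  -- 3*S + n = n^3, T = m*S, n*(n-1)*(B+1) ≤ T
  -- so 3*n*(n-1)*(B+1) ≤ 3*m*S = m*(n^3 - n) = m*n*(n-1)*(n+1)
  have h1 : 3 * (n * ((n - 1) * (B + 1))) ≤ m * (3 * S) := by
    rw [hTval] at hTlow
    calc 3 * (n * ((n - 1) * (B + 1))) ≤ 3 * (m * S) := by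
          exact Nat.mul_le_mul_left 3 hTlow
      _ = m * (3 * S) := by ring
  have h2 : m * (3 * S) = m * (n ^ 3 - n) := by
    congr 1
    rw [hS]
    omega
  have h3 : m * (n ^ 3 - n) = n * ((n - 1) * ((n + 1) * m)) := by
    have hcube : n ^ 3 - n = n * ((n - 1) * (n + 1)) := by
      obtain ⟨k, rfl⟩ : ∃ k, n = k + 2 := ⟨n - 2, by omega⟩
      have e2 : k + 2 - 1 = k + 1 := by omega
      have h : (k+2) ^ 3 = (k+2) * ((k+1) * (k+3)) + (k+2) := by ring
      rw [h, Nat.add_sub_cancel, e2]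
    rw [hcube]; ring
  rw [h2, h3] at h1
  have hpos : 0 < n * (n - 1) := by
    have : 1 ≤ n - 1 := by omega
    exact Nat.mul_pos (by omega) this
  have h4 : 3 * (B + 1) ≤ (n + 1) * m := by
    have h1' : (n * (n - 1)) * (3 * (B + 1)) ≤ (n * (n - 1)) * ((n + 1) * m) := by
      calc (n * (n - 1)) * (3 * (B + 1)) = 3 * (n * ((n - 1) * (B + 1))) := by ring
        _ ≤ n * ((n - 1) * ((n + 1) * m)) := h1
        _ = (n * (n - 1)) * ((n + 1) * m) := by ring
    exact Nat.le_of_mul_le_mul_left h1' hpos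
  omega
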